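/- Let d > 0 be a real number. The function a : ℝ → ℝ defined by a(x) = x·(log(4x/(e²·d)))² is concave on the interval [0, d·e/4] (with the convention a(0) = 0), and its derivative vanishes at x = d/4, i.e. a'(d/4) = 0. -/

import Mathlib

open Real Set Filter Topology

lemma hasDerivAt_L {c x : ℝ} (hc : 0 < c) (hx : 0 < x) :
    HasDerivAt (fun y : ℝ => Real.log (c * y)) (1 / x) x := by
  have h : HasDerivAt (fun y : ℝ => c * y) c x := by
    simpa using (hasDerivAt_id x).const_mul c
  have := (Real.hasDerivAt_log (mul_pos hc hx).ne').comp x h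
  refine this.congr_deriv ?_
  field_simp

lemma hasDerivAt_f {c x : ℝ} (hc : 0 < c) (hx : 0 < x) :
    HasDerivAt (fun y : ℝ => y * Real.log (c * y) ^ 2)
      (Real.log (c * x) ^ 2 + 2 * Real.log (c * x)) x := by
  have h := (hasDerivAt_id x).mul ((hasDerivAt_L hc hx).pow 2)
  refine h.congr_deriv ?_
  simp only [Pi.pow_apply, id]
  field_simp
  rw [show (2:ℕ) - 1 = 1 from rfl]; push_cast; ring

lemma hasDerivAt_f' {c x : ℝ} (hc : 0 < c) (hx : 0 < x) :
    HasDerivAt (fun y : ℝ => Real.log (c * y) ^ 2 + 2 * Real.log (c * y))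
      ((2 * Real.log (c * x) + 2) / x) x := by
  have h := (((hasDerivAt_L hc hx).pow 2)).add (((hasDerivAt_L hc hx)).const_mul 2)
  refine h.congr_deriv ?_
  field_simp
  rw [show (2:ℕ) - 1 = 1 from rfl]; push_cast; ring

theorem concaveOn_mul_sq_log (d : ℝ) (hd : 0 < d) :
    ConcaveOn ℝ (Set.Icc 0 (d * Real.exp 1 / 4))
        (fun x : ℝ => x * Real.log (4 * x / (Real.exp 1 ^ 2 * d)) ^ 2) ∧
      HasDerivAt (fun x : ℝ => x * Real.log (4 * x / (Real.exp 1 ^ 2 * d)) ^ 2) 0 (d / 4) := by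
  set c : ℝ := 4 / (Real.exp 1 ^ 2 * d) with hc_def
  have hE : (0:ℝ) < Real.exp 1 := Real.exp_pos 1
  have hc : 0 < c := by positivity
  have hE2 : Real.exp 1 ^ 2 = Real.exp 2 := by rw [sq, ← Real.exp_add]; norm_num
  have hfeq : (fun x : ℝ => x * Real.log (4 * x / (Real.exp 1 ^ 2 * d)) ^ 2)
      = fun x : ℝ => x * Real.log (c * x) ^ 2 := by
    funext x; rw [hc_def]; ring_nf
  set b : ℝ := d * Real.exp 1 / 4 with hb_def
  have hb : 0 < b := by positivity
  rw [hfeq]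
  constructor
  · -- concavity
    have hcont : ContinuousOn (fun x : ℝ => x * Real.log (c * x) ^ 2) (Icc 0 b) := by
      intro x hx
      rcases eq_or_lt_of_le hx.1 with h0 | h0
      · -- x = 0
        subst h0
        rw [← continuousWithinAt_diff_self]
        have hsub : Icc (0:ℝ) b \ {0} ⊆ Ioi 0 := by
          rintro y ⟨⟨hy0, _⟩, hy⟩
          exact lt_of_le_of_ne hy0 (Ne.symm (by simpa using hy))
        have htend : Tendsto (fun x : ℝ => x * Real.log (c * x) ^ 2) (𝓝[>] 0) (𝓝 0) := by
          have h1 : Tendsto (fun x : ℝ => Real.log x * x ^ (1/2 : ℝ)) (𝓝[>] 0) (𝓝 0) :=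
            tendsto_log_mul_rpow_nhdsGT_zero (by norm_num)
          have h2 : Tendsto (fun x : ℝ => (Real.log x * x ^ (1/2 : ℝ))^2
              + (2 * Real.log c) * (Real.log x * x ^ (1:ℝ)) + (Real.log c)^2 * x) (𝓝[>] 0)
              (𝓝 ((0:ℝ)^2 + (2 * Real.log c) * 0 + (Real.log c)^2 * 0)) := by
            refine Filter.Tendsto.add (Filter.Tendsto.add (h1.pow 2) ?_) ?_
            · exact ((tendsto_log_mul_rpow_nhdsGT_zero one_pos).const_mul _)
            · exact (Filter.Tendsto.const_mul _
                (tendsto_nhdsWithin_of_tendsto_nhds tendsto_id))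
          simp only [zero_pow, mul_zero, add_zero, ne_eq, OfNat.ofNat_ne_zero,
            not_false_eq_true, pow_eq_zero_iff] at h2
          refine h2.congr' ?_
          filter_upwards [self_mem_nhdsWithin] with x (hx : 0 < x)
          have hxx : x ^ ((1:ℝ)/2) * x ^ ((1:ℝ)/2) = x := by
            rw [← Real.rpow_add hx]; norm_num
          rw [Real.log_mul hc.ne' hx.ne', Real.rpow_one]
          have key : (Real.log x * x ^ ((1:ℝ)/2))^2 = Real.log x ^ 2 * x := by
            rw [mul_pow, sq (x ^ ((1:ℝ)/2)), hxx]
          rw [key]; ring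
        refine Tendsto.mono_left ?_ (nhdsWithin_mono _ hsub)
        simpa using htend
      · -- x > 0
        exact ((hasDerivAt_f hc h0).continuousAt).continuousWithinAt
    have hint : interior (Icc (0:ℝ) b) = Ioo 0 b := interior_Icc
    refine concaveOn_of_hasDerivWithinAt2_nonpos (convex_Icc _ _) hcont
      (f' := fun x => Real.log (c * x) ^ 2 + 2 * Real.log (c * x))
      (f'' := fun x => (2 * Real.log (c * x) + 2) / x) ?_ ?_ ?_
    · intro x hx
      rw [hint] at hx
      exact (hasDerivAt_f hc hx.1).hasDerivWithinAt
    · intro x hx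
      rw [hint] at hx
      exact (hasDerivAt_f' hc hx.1).hasDerivWithinAt
    · intro x hx
      rw [hint] at hx
      obtain ⟨hx0, hxb⟩ := hx
      have hcx : c * x < Real.exp (-1) := by
        have : c * b = Real.exp (-1) := by
          rw [hc_def, hb_def, hE2, Real.exp_neg]
          field_simp
          rw [← hE2]
        calc c * x < c * b := by exact (mul_lt_mul_iff_right₀ hc).mpr hxb
          _ = Real.exp (-1) := this
      have hlog : Real.log (c * x) < -1 := by
        have := Real.log_lt_log (mul_pos hc hx0) hcx
        rwa [Real.log_exp] at this
      apply div_nonpos_of_nonpos_of_nonneg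
      · linarith
      · exact hx0.le
  · -- derivative at d/4
    have hx : (0:ℝ) < d / 4 := by linarith
    have h := hasDerivAt_f hc hx
    have hcd : c * (d / 4) = Real.exp (-2) := by
      rw [hc_def, hE2, Real.exp_neg]
      field_simp
    rw [hcd, Real.log_exp] at h
    have h0 : ((-2:ℝ))^2 + 2*(-2) = 0 := by norm_num
    rw [h0] at h
    exact h
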